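/- Let n ≥ 2. The closure of X(Σ)_{∅,[n-1];≥0} taken inside the topological space X(Σ)_{≥0} (with the subspace topology from X(Σ)) equals all of X(Σ)_{≥0}. -/

import Mathlib

open Matrix

attribute [local instance] Classical.propDecidable

noncomputable section

namespace PetersonPaper

/-- `ℂ^{2(n-1)}` with coordinates `(x_1,…,x_{n-1}; y_1,…,y_{n-1})`. -/
abbrev C2 (n : ℕ) := (Fin (n-1) → ℂ) × (Fin (n-1) → ℂ)

/-- The complement `ℂ^{2(n-1)} - E` of the exceptional locus: for every `i`,
`(x_i, y_i) ≠ (0,0)`. -/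
def goodSet (n : ℕ) : Set (C2 n) := { p | ∀ i, p.1 i ≠ 0 ∨ p.2 i ≠ 0 }

/-- The maximal torus `T ⊆ SL_n(ℂ)` of diagonal matrices, recorded by its diagonal
entries `(t_1,…,t_n)` with `∏ t_i = 1`. -/
def TGrp (n : ℕ) : Type := { t : Fin n → ℂ // ∏ i, t i = 1 }

/-- The fundamental weight `ϖ_i(t) = t_1 t_2 ⋯ t_i` (1-based; `i : Fin (n-1)`
encodes `i.1+1`). -/
def varpi (n : ℕ) (t : TGrp n) (i : Fin (n-1)) : ℂ :=
  ∏ k : Fin n, if (k : ℕ) ≤ (i : ℕ) then t.1 k else 1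

/-- The simple root `α_i(t) = t_i t_{i+1}⁻¹` (1-based; `i : Fin (n-1)` encodes
`i.1+1`). -/
def alphaR (n : ℕ) (t : TGrp n) (i : Fin (n-1)) : ℂ :=
  t.1 ⟨i.1, by have := i.isLt; omega⟩ * (t.1 ⟨i.1 + 1, by have := i.isLt; omega⟩)⁻¹

/-- The `T`-action `t • (x; y) = (ϖ_i(t) x_i; α_i(t) y_i)`. -/
def actT (n : ℕ) (t : TGrp n) (p : C2 n) : C2 n :=
  (fun i => varpi n t i * p.1 i, fun i => alphaR n t i * p.2 i)

/-- The orbit relation of the `T`-action on `ℂ^{2(n-1)} - E`. -/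
def XRel (n : ℕ) (p q : goodSet n) : Prop := ∃ t : TGrp n, actT n t ↑p = (↑q : C2 n)

/-- The toric variety `X(Σ) = (ℂ^{2(n-1)} - E)/T`, with the quotient topology. -/
def XSig (n : ℕ) := Quot (XRel n)

noncomputable instance (n : ℕ) : TopologicalSpace (XSig n) :=
  inferInstanceAs (TopologicalSpace (Quot (XRel n)))

/-- The class `[x; y] ∈ X(Σ)` of a point of `ℂ^{2(n-1)} - E`. -/
def XMk (n : ℕ) (p : goodSet n) : XSig n := Quot.mk (XRel n) p

/-- The torus orbit `X(Σ)_{K,J}`: classes `[x;y]` with `x_i = 0` iff `i ∈ K` and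
`y_i ≠ 0` iff `i ∈ J`. -/
def XKJ (n : ℕ) (K J : Set (Fin (n-1))) : Set (XSig n) :=
  { z | ∃ p : goodSet n, XMk n p = z ∧
      (∀ i, (p : C2 n).1 i = 0 ↔ i ∈ K) ∧ (∀ i, (p : C2 n).2 i ≠ 0 ↔ i ∈ J) }

/-- The nonnegative part `X(Σ)_{≥0}`: classes with a representative all of whose
coordinates are real and nonnegative. -/
def Xge0 (n : ℕ) : Set (XSig n) :=
  { z | ∃ p : goodSet n, XMk n p = z ∧
      ∀ i, ((p : C2 n).1 i).im = 0 ∧ 0 ≤ ((p : C2 n).1 i).re ∧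
        ((p : C2 n).2 i).im = 0 ∧ 0 ≤ ((p : C2 n).2 i).re }

/-- `X(Σ)_{K,J;≥0} = X(Σ)_{K,J} ∩ X(Σ)_{≥0}`. -/
def XKJge0 (n : ℕ) (K J : Set (Fin (n-1))) : Set (XSig n) := XKJ n K J ∩ Xge0 n

/-- Lemma: the closure of `X(Σ)_{∅,[n-1];≥0}` taken in `X(Σ)_{≥0}` is all of
`X(Σ)_{≥0}`. -/
theorem closure_top_stratum_eq_nonneg_part (n : ℕ) (hn : 2 ≤ n) :
    closure (Subtype.val ⁻¹' (XKJge0 n (∅ : Set (Fin (n-1))) (Set.univ : Set (Fin (n-1))))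
        : Set (Xge0 n)) = Set.univ := by
  rw [Set.eq_univ_iff_forall]
  intro z
  rw [mem_closure_iff]
  intro o ho hzo
  obtain ⟨V, hV, rfl⟩ := isOpen_induced_iff.mp ho
  obtain ⟨p, hp, hnn⟩ := z.2
  -- `XMk n ⁻¹' V` is open in `goodSet n`
  have hcont : Continuous (XMk n) := continuous_quot_mk
  have hpreV : IsOpen (XMk n ⁻¹' V) := hV.preimage hcont
  obtain ⟨W, hW, hWeq⟩ := isOpen_induced_iff.mp hpreV
  -- the perturbation map
  set q : ℝ → C2 n := fun ε =>
    (fun i => (p : C2 n).1 i + (ε : ℂ), fun i => (p : C2 n).2 i + (ε : ℂ)) with hq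
  have hqc : Continuous q := by
    apply Continuous.prodMk
    · exact continuous_pi fun i => continuous_const.add Complex.continuous_ofReal
    · exact continuous_pi fun i => continuous_const.add Complex.continuous_ofReal
  have hq0 : q 0 = (p : C2 n) := by
    simp only [hq, Complex.ofReal_zero, add_zero]
  -- `p ∈ W`
  have hzV : (z : XSig n) ∈ V := hzo
  have hpV : p ∈ XMk n ⁻¹' V := by
    simp only [Set.mem_preimage, hp]; exact hzV
  have hpW : (p : C2 n) ∈ W := by
    rw [← hWeq] at hpV; exact hpV
  -- find a small positive ε with q ε ∈ W
  have hopen : IsOpen (q ⁻¹' W) := hW.preimage hqc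
  have h0mem : (0 : ℝ) ∈ q ⁻¹' W := by
    simp only [Set.mem_preimage, hq0]; exact hpW
  obtain ⟨δ, hδpos, hball⟩ := Metric.isOpen_iff.mp hopen 0 h0mem
  set ε : ℝ := δ / 2 with hε
  have hεpos : 0 < ε := by positivity
  have hεW : q ε ∈ W := by
    apply hball
    simp only [Metric.mem_ball, Real.dist_eq, sub_zero, abs_of_pos hεpos, hε]
    rw [abs_of_pos (by linarith : (0:ℝ) < δ / 2)]; linarith
  -- coordinates of q ε are strictly positive reals
  have hre1 : ∀ i, 0 < ((q ε).1 i).re := by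
    intro i
    simp only [hq, Complex.add_re, Complex.ofReal_re]
    have := (hnn i).2.1
    linarith
  have hre2 : ∀ i, 0 < ((q ε).2 i).re := by
    intro i
    simp only [hq, Complex.add_re, Complex.ofReal_re]
    have := (hnn i).2.2.2
    linarith
  have him1 : ∀ i, ((q ε).1 i).im = 0 := by
    intro i
    simp only [hq, Complex.add_im, Complex.ofReal_im, (hnn i).1, add_zero]
  have him2 : ∀ i, ((q ε).2 i).im = 0 := by
    intro i
    simp only [hq, Complex.add_im, Complex.ofReal_im, (hnn i).2.2.1, add_zero]
  have hne1 : ∀ i, (q ε).1 i ≠ 0 := fun i h => by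
    have := hre1 i; rw [h] at this; simp at this
  have hne2 : ∀ i, (q ε).2 i ≠ 0 := fun i h => by
    have := hre2 i; rw [h] at this; simp at this
  have hgood : q ε ∈ goodSet n := fun i => Or.inl (hne1 i)
  set P : goodSet n := ⟨q ε, hgood⟩ with hP
  -- its class is in Xge0
  have hXge0 : XMk n P ∈ Xge0 n := by
    refine ⟨P, rfl, fun i => ?_⟩
    exact ⟨him1 i, (hre1 i).le, him2 i, (hre2 i).le⟩
  -- its class is in the open stratum
  have hstr : XMk n P ∈ XKJge0 n (∅ : Set (Fin (n-1))) (Set.univ : Set (Fin (n-1))) := by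
    constructor
    · refine ⟨P, rfl, fun i => ?_, fun i => ?_⟩
      · simp only [Set.mem_empty_iff_false, iff_false]; exact hne1 i
      · simp only [Set.mem_univ, iff_true]; exact hne2 i
    · exact hXge0
  -- its class is in V
  have hPV : XMk n P ∈ V := by
    have : P ∈ Subtype.val ⁻¹' W := hεW
    rw [hWeq] at this
    exact this
  exact ⟨⟨XMk n P, hXge0⟩, hPV, hstr⟩

end PetersonPaper
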